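/- Let x_1,...,x_n be distinct positive real numbers, ω(x) = ∏_{i=1}^n (x - x_i). Define M with (i,j) entry (-1)^{j-1} x_i^{n-j}/ω'(x_i) and J_F with (i,j) entry ∂c_i/∂x_j where c_i is the i-th elementary symmetric polynomial. Then M · J_F = I_n. -/

import Mathlib

open Polynomial Finset

lemma pderiv_prod_X_of_not_mem {n : ℕ} {k : Fin n} {t : Finset (Fin n)} (hk : k ∉ t) :
    MvPolynomial.pderiv k (∏ i ∈ t, MvPolynomial.X i : MvPolynomial (Fin n) ℝ) = 0 := by
  classical
  induction t using Finset.induction with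
  | empty => simp
  | @insert a s ha ih =>
    rw [Finset.prod_insert ha, Derivation.leibniz]
    rw [MvPolynomial.pderiv_X_of_ne (by rintro rfl; exact hk (Finset.mem_insert_self a s)),
      ih (fun h => hk (Finset.mem_insert_of_mem h))]
    simp

lemma pderiv_prod_X {n : ℕ} (k : Fin n) (t : Finset (Fin n)) :
    MvPolynomial.pderiv k (∏ i ∈ t, MvPolynomial.X i : MvPolynomial (Fin n) ℝ) =
      if k ∈ t then ∏ i ∈ t.erase k, MvPolynomial.X i else 0 := by
  classical
  by_cases hk : k ∈ t
  · rw [if_pos hk, ← Finset.mul_prod_erase _ _ hk, Derivation.leibniz,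
      MvPolynomial.pderiv_X_self, pderiv_prod_X_of_not_mem (Finset.notMem_erase k t)]
    simp
  · rw [if_neg hk, pderiv_prod_X_of_not_mem hk]

lemma eval_pderiv_esymm {n : ℕ} (x : Fin n → ℝ) (m : ℕ) (k : Fin n) :
    MvPolynomial.eval x (MvPolynomial.pderiv k (MvPolynomial.esymm (Fin n) ℝ (m + 1))) =
      ∑ t ∈ powersetCard m ((univ : Finset (Fin n)).erase k), ∏ i ∈ t, x i := by
  classical
  rw [MvPolynomial.esymm, map_sum, map_sum]
  simp_rw [pderiv_prod_X]
  have huniv : (univ : Finset (Fin n)) = insert k (univ.erase k) := by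
    rw [Finset.insert_erase (Finset.mem_univ k)]
  have hp : powersetCard (m + 1) (univ : Finset (Fin n)) =
      powersetCard (m + 1) (univ.erase k) ∪
        (powersetCard m (univ.erase k)).image (insert k) := by
    conv_lhs => rw [huniv]
    rw [Finset.powersetCard_succ_insert (Finset.notMem_erase k univ)]
  rw [hp, Finset.sum_union]
  · have h1 : ∑ t ∈ powersetCard (m + 1) (univ.erase k),
        MvPolynomial.eval x (if k ∈ t then ∏ i ∈ t.erase k, MvPolynomial.X i else 0) = 0 := by
      apply Finset.sum_eq_zero
      intro t ht
      have : k ∉ t := fun h =>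
        Finset.notMem_erase k univ ((Finset.mem_powersetCard.mp ht).1 h)
      rw [if_neg this, map_zero]
    rw [h1, zero_add]
    rw [Finset.sum_image]
    · apply Finset.sum_congr rfl
      intro t ht
      have hkt : k ∉ t := fun h =>
        Finset.notMem_erase k univ ((Finset.mem_powersetCard.mp ht).1 h)
      rw [if_pos (Finset.mem_insert_self k t), Finset.erase_insert hkt]
      simp [MvPolynomial.eval_prod]
    · intro a ha b hb hab
      have hka : k ∉ a := fun h =>
        Finset.notMem_erase k univ ((Finset.mem_powersetCard.mp ha).1 h)
      have hkb : k ∉ b := fun h =>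
        Finset.notMem_erase k univ ((Finset.mem_powersetCard.mp hb).1 h)
      rw [← Finset.erase_insert hka, ← Finset.erase_insert hkb, hab]
  · rw [Finset.disjoint_left]
    intro t ht ht'
    obtain ⟨s, _, rfl⟩ := Finset.mem_image.mp ht'
    exact Finset.notMem_erase k univ
      ((Finset.mem_powersetCard.mp ht).1 (Finset.mem_insert_self k s))

lemma vieta_sum {n : ℕ} (x : Fin n → ℝ) (k : Fin n) (y : ℝ) :
    ∑ j : Fin n, (-1 : ℝ) ^ (j : ℕ) * y ^ (n - 1 - (j : ℕ)) *
        ∑ t ∈ powersetCard (j : ℕ) ((univ : Finset (Fin n)).erase k), ∏ i ∈ t, x i =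
      ∏ ℓ ∈ (univ : Finset (Fin n)).erase k, (y - x ℓ) := by
  classical
  set s : Multiset ℝ := ((univ : Finset (Fin n)).erase k).val.map x with hs
  have hcard : Multiset.card s = n - 1 := by
    simp [hs, Finset.card_erase_of_mem (Finset.mem_univ k)]
  have hn : n - 1 + 1 = n := Nat.succ_pred_eq_of_pos (Fin.pos k)
  have h := congrArg (Polynomial.eval y) (Multiset.prod_X_sub_X_eq_sum_esymm s)
  rw [Polynomial.eval_multiset_prod, Polynomial.eval_finset_sum] at h
  have hlhs : (s.map fun t => X - C t).map (Polynomial.eval y) =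
      s.map (fun t => y - t) := by
    rw [Multiset.map_map]; apply Multiset.map_congr rfl; intro z _; simp
  rw [hlhs] at h
  have hrhs : ∀ j ∈ Finset.range (Multiset.card s + 1),
      Polynomial.eval y ((-1 : ℝ[X]) ^ j * (C (s.esymm j) * X ^ (Multiset.card s - j))) =
        (-1 : ℝ) ^ j * y ^ (n - 1 - j) *
          ∑ t ∈ powersetCard j ((univ : Finset (Fin n)).erase k), ∏ i ∈ t, x i := by
    intro j _
    rw [hs, Finset.esymm_map_val]
    simp only [Polynomial.eval_mul, Polynomial.eval_pow, Polynomial.eval_neg,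
      Polynomial.eval_one, Polynomial.eval_C, Polynomial.eval_X, hcard]
    rw [← hs, hcard]
    ring
  rw [Finset.sum_congr rfl hrhs] at h
  rw [hcard, hn] at h
  rw [Fin.sum_univ_eq_sum_range (fun j => (-1 : ℝ) ^ j * y ^ (n - 1 - j) *
    ∑ t ∈ powersetCard j ((univ : Finset (Fin n)).erase k), ∏ i ∈ t, x i), ← h]
  rw [hs, Multiset.map_map]
  simp [Finset.prod_eq_multiset_prod]

theorem inv_mul_jacobian_eq_one (n : ℕ) (x : Fin n → ℝ)
    (hx : Function.Injective x) (hpos : ∀ i, 0 < x i) :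
    let ω : Polynomial ℝ := ∏ i : Fin n, (X - C (x i))
    let J : Matrix (Fin n) (Fin n) ℝ := fun i j =>
      MvPolynomial.eval x (MvPolynomial.pderiv j (MvPolynomial.esymm (Fin n) ℝ (i.val + 1)))
    let M : Matrix (Fin n) (Fin n) ℝ := fun i j =>
      (-1 : ℝ) ^ (j.val) * x i ^ (n - 1 - j.val) / (derivative ω).eval (x i)
    M * J = 1 := by
  classical
  intro ω J M
  have hω : ω = Lagrange.nodal univ x := (Lagrange.nodal_eq _ _).symm
  have hD : ∀ i : Fin n, (derivative ω).eval (x i) =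
      ∏ ℓ ∈ (univ : Finset (Fin n)).erase i, (x i - x ℓ) := by
    intro i
    rw [hω, Lagrange.eval_nodal_derivative_eval_node_eq (Finset.mem_univ i),
      Lagrange.eval_nodal]
  have hDne : ∀ i : Fin n, (derivative ω).eval (x i) ≠ 0 := by
    intro i
    rw [hD i]
    apply Finset.prod_ne_zero_iff.mpr
    intro ℓ hℓ
    rw [sub_ne_zero]
    exact fun h => (Finset.mem_erase.mp hℓ).1 (hx h.symm)
  ext i k
  rw [Matrix.mul_apply, Matrix.one_apply]
  have hJ : ∀ j : Fin n, J j k =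
      ∑ t ∈ powersetCard (j : ℕ) ((univ : Finset (Fin n)).erase k), ∏ i ∈ t, x i :=
    fun j => eval_pderiv_esymm x j k
  calc ∑ j, M i j * J j k
      = (∑ j : Fin n, (-1 : ℝ) ^ (j : ℕ) * x i ^ (n - 1 - (j : ℕ)) *
          ∑ t ∈ powersetCard (j : ℕ) ((univ : Finset (Fin n)).erase k), ∏ l ∈ t, x l) /
          (derivative ω).eval (x i) := by
        rw [Finset.sum_div]
        apply Finset.sum_congr rfl
        intro j _
        rw [hJ j]
        simp only [M]
        ring
    _ = (∏ ℓ ∈ (univ : Finset (Fin n)).erase k, (x i - x ℓ)) / (derivative ω).eval (x i) := by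
        rw [vieta_sum x k (x i)]
    _ = if i = k then 1 else 0 := by
        by_cases hik : i = k
        · subst hik
          rw [if_pos rfl, ← hD i, div_self (hDne i)]
        · rw [if_neg hik]
          have : ∏ ℓ ∈ (univ : Finset (Fin n)).erase k, (x i - x ℓ) = 0 := by
            apply Finset.prod_eq_zero (Finset.mem_erase.mpr ⟨hik, Finset.mem_univ i⟩)
            simp
          rw [this, zero_div]
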